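/- Let d ≥ 1, q ∈ (0,∞), E ⊆ ℝ^d be a non-degenerate parallelepiped, ω : ℝ^d → (0,∞) satisfy ω(ξ+η) ≤ C₀ e^{R|η|} ω(ξ) for some C₀, R > 0 and all ξ, η ∈ ℝ^d, and let φ : ℝ^d → ℂ be a nonzero continuous function such that for every r > 0 there is C_r > 0 with |φ(x)| ≤ C_r e^{-r|x|} and |φ̂(ξ)| ≤ C_r e^{-r|ξ|} for all x, ξ. Then there exists a constant C > 0 such that: for every a : Λ'_E → ℂ with Σ_{α∈Λ'_E} (|a(α)| ω(α))^q < ∞, the series F(x,ξ) = Σ_{α∈Λ'_E} a(α) conj(φ̂(α−ξ)) e^{i⟨x,α−ξ⟩} converges absolutely for every (x,ξ) ∈ ℝ^d × ℝ^d and ∫_{ℝ^d} ( sup_{x∈ℝ^d} |F(x,ξ)| ω(ξ) )^q dξ ≤ C Σ_{α∈Λ'_E} (|a(α)| ω(α))^q. -/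

import Mathlib

open MeasureTheory Filter
open scoped BigOperators InnerProductSpace Topology

noncomputable section

abbrev Euc (d : ℕ) := EuclideanSpace ℝ (Fin d)

/-- The lattice point `∑ i, j i • e i` associated with `j : ℤ^d`. -/
def latPt {d : ℕ} (e : Fin d → Euc d) (j : Fin d → ℤ) : Euc d :=
  ∑ i, (j i : ℝ) • e i

/-- The (closed) parallelepiped spanned by `e`. -/
def paraSet {d : ℕ} (e : Fin d → Euc d) : Set (Euc d) :=
  (fun t : Fin d → ℝ => ∑ i, t i • e i) '' (Set.univ.pi fun _ => Set.Icc (0:ℝ) 1)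

/-- Fourier coefficient `c(f, ξ) = |E|⁻¹ ∫_E f(x) e^{-i⟨x,ξ⟩} dx`. -/
def fourCoeff {d : ℕ} (e : Fin d → Euc d) (f : Euc d → ℂ) (ξ : Euc d) : ℂ :=
  (((volume (paraSet e)).toReal : ℂ))⁻¹ *
    ∫ x in paraSet e, f x * Complex.exp (-(Complex.I) * (⟪x, ξ⟫_ℝ : ℂ))

/-- Iterated partial derivatives along a list of coordinate directions. -/
def pdSeq {d : ℕ} : List (Fin d) → (Euc d → ℂ) → (Euc d → ℂ)
  | [], f => f
  | (i :: L), f => pdSeq L (fun x => fderiv ℝ f x (EuclideanSpace.single i 1))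

/-- The canonical list of directions attached to a multi-index `β`. -/
def mIdxL {d : ℕ} (β : Fin d → ℕ) : List (Fin d) :=
  (List.finRange d).flatMap fun i => List.replicate (β i) i

/-- The multi-index partial derivative `∂^β f`. -/
def pD {d : ℕ} (β : Fin d → ℕ) (f : Euc d → ℂ) : Euc d → ℂ := pdSeq (mIdxL β) f

/-- Fourier transform, normalized as `(2π)^{-d/2} ∫ f(x) e^{-i⟨x,ξ⟩} dx`. -/
def FT {d : ℕ} (f : Euc d → ℂ) (ξ : Euc d) : ℂ :=
  (((2 * Real.pi) ^ (-(d:ℝ)/2) : ℝ) : ℂ) *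
    ∫ x, f x * Complex.exp (-(Complex.I) * (⟪x, ξ⟫_ℝ : ℂ))

/-- Short-time Fourier transform with window `φ`. -/
def STFT {d : ℕ} (φ f : Euc d → ℂ) (x ξ : Euc d) : ℂ :=
  (((2 * Real.pi) ^ (-(d:ℝ)/2) : ℝ) : ℂ) *
    ∫ y, f y * (starRingEnd ℂ) (φ (y - x)) * Complex.exp (-(Complex.I) * (⟪y, ξ⟫_ℝ : ℂ))


/-- The series `F(x,ξ) = Σ_{α ∈ Λ'_E} a(α) conj(φ̂(α−ξ)) e^{i⟨x,α−ξ⟩}`; one has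
`|F(x,ξ)| = |V_φf(x,ξ)|` for the `E`-periodic object `f` with Fourier coefficients `a`. -/
def FserMod {d : ℕ} (e' : Fin d → Euc d) (φ : Euc d → ℂ) (a : (Fin d → ℤ) → ℂ)
    (x ξ : Euc d) : ℂ :=
  ∑' ι : Fin d → ℤ,
    a ι * (starRingEnd ℂ) (FT φ (latPt e' ι - ξ)) *
      Complex.exp (Complex.I * (⟪x, latPt e' ι - ξ⟫_ℝ : ℂ))

open scoped ENNReal NNReal

namespace Aux15

lemma rpow_tsum_le {ι : Type*} (u : ι → ℝ≥0∞) {p : ℝ} (hp0 : 0 < p) (hp1 : p ≤ 1) :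
    (∑' i, u i) ^ p ≤ ∑' i, u i ^ p := by
  have hfin : ∀ s : Finset ι, (∑ i ∈ s, u i) ^ p ≤ ∑ i ∈ s, u i ^ p := by
    intro s
    induction s using Finset.cons_induction with
    | empty => simp [ENNReal.zero_rpow_of_pos hp0]
    | cons a s ha ih =>
      rw [Finset.sum_cons, Finset.sum_cons]
      exact (ENNReal.rpow_add_le_add_rpow _ _ hp0.le hp1).trans (by gcongr)
  have hC : ∀ s : Finset ι, ∑ i ∈ s, u i ≤ (∑' i, u i ^ p) ^ (1 / p) := by
    intro s
    have h1 : ((∑ i ∈ s, u i) ^ p) ^ (1 / p) ≤ (∑' i, u i ^ p) ^ (1 / p) :=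
      ENNReal.rpow_le_rpow ((hfin s).trans (ENNReal.sum_le_tsum s)) (by positivity)
    rwa [← ENNReal.rpow_mul, mul_one_div, div_self hp0.ne', ENNReal.rpow_one] at h1
  have h2 : (∑' i, u i) ≤ (∑' i, u i ^ p) ^ (1 / p) := by
    rw [ENNReal.tsum_eq_iSup_sum]; exact iSup_le hC
  calc (∑' i, u i) ^ p ≤ ((∑' i, u i ^ p) ^ (1 / p)) ^ p := ENNReal.rpow_le_rpow h2 hp0.le
    _ = ∑' i, u i ^ p := by
        rw [← ENNReal.rpow_mul, one_div, inv_mul_cancel₀ hp0.ne', ENNReal.rpow_one]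

lemma tsum_pi_prod : ∀ (n : ℕ) (g : Fin n → ℤ → ℝ≥0∞),
    ∑' ι : Fin n → ℤ, ∏ i, g i (ι i) = ∏ i, ∑' j : ℤ, g i j := by
  intro n
  induction n with
  | zero =>
    intro g
    rw [tsum_eq_single (fun _ => (0:ℤ)) (fun b hb => absurd (funext fun i => i.elim0) hb)]
    simp
  | succ n ih =>
    intro g
    rw [← (Fin.consEquiv (fun _ : Fin (n+1) => ℤ)).tsum_eq]
    rw [ENNReal.tsum_prod']
    have hprod : ∀ (x : ℤ) (v : Fin n → ℤ),
        (∏ i, g i ((Fin.consEquiv (fun _ : Fin (n+1) => ℤ)) (x, v) i)) =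
          g 0 x * ∏ i : Fin n, g i.succ (v i) := by
      intro x v
      rw [Fin.prod_univ_succ]
      simp [Fin.consEquiv]
    simp_rw [hprod]
    rw [Fin.prod_univ_succ]
    calc ∑' x : ℤ, ∑' v : Fin n → ℤ, g 0 x * ∏ i : Fin n, g i.succ (v i)
        = ∑' x : ℤ, g 0 x * ∑' v : Fin n → ℤ, ∏ i : Fin n, g i.succ (v i) := by
          simp_rw [ENNReal.tsum_mul_left]
      _ = (∑' x : ℤ, g 0 x) * ∑' v : Fin n → ℤ, ∏ i, g i.succ (v i) := ENNReal.tsum_mul_right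
      _ = _ := by rw [ih (fun i => g i.succ)]

lemma int_tsum_le {l : ℝ} (hl : 0 < l) :
    ∑' j : ℤ, ENNReal.ofReal (Real.exp (-l * |(j : ℝ)|)) ≤
      2 * (1 - ENNReal.ofReal (Real.exp (-l)))⁻¹ := by
  have hsurj : Function.Surjective
      (fun p : ℕ × Bool => if p.2 then (p.1 : ℤ) else -(p.1 : ℤ)) := by
    intro z
    rcases le_or_gt 0 z with h | h
    · exact ⟨(z.toNat, true), by simp [Int.toNat_of_nonneg h]⟩
    · exact ⟨(z.natAbs, false), by show -(z.natAbs : ℤ) = z; omega⟩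
  calc ∑' j : ℤ, ENNReal.ofReal (Real.exp (-l * |(j : ℝ)|))
      ≤ ∑' p : ℕ × Bool, ENNReal.ofReal
          (Real.exp (-l * |(((if p.2 then (p.1 : ℤ) else -(p.1 : ℤ)) : ℤ) : ℝ)|)) :=
        ENNReal.tsum_le_tsum_comp_of_surjective hsurj _
    _ = ∑' m : ℕ, ∑' b : Bool, ENNReal.ofReal
          (Real.exp (-l * |(((if b then (m : ℤ) else -(m : ℤ)) : ℤ) : ℝ)|)) :=
        ENNReal.tsum_prod'
    _ = ∑' m : ℕ, 2 * ENNReal.ofReal (Real.exp (-l)) ^ m := by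
        refine tsum_congr fun m => ?_
        rw [tsum_bool]
        have habs : ∀ b : Bool, |(((if b then (m : ℤ) else -(m : ℤ)) : ℤ) : ℝ)| = (m : ℝ) := by
          intro b; cases b <;> simp
        rw [habs true, habs false]
        have : Real.exp (-l * (m : ℝ)) = Real.exp (-l) ^ m := by
          rw [← Real.exp_nat_mul]; ring_nf
        rw [this, ENNReal.ofReal_pow (Real.exp_nonneg _)]
        ring
    _ = 2 * (1 - ENNReal.ofReal (Real.exp (-l)))⁻¹ := by
        rw [ENNReal.tsum_mul_left, ENNReal.tsum_geometric]

lemma int_tsum_shift_le {l : ℝ} (hl : 0 < l) (u : ℝ) :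
    ∑' j : ℤ, ENNReal.ofReal (Real.exp (-l * |(j : ℝ) - u|)) ≤
      ENNReal.ofReal (Real.exp l) * (2 * (1 - ENNReal.ofReal (Real.exp (-l)))⁻¹) := by
  have key : ∀ j : ℤ, Real.exp (-l * |(j : ℝ) - u|) ≤
      Real.exp l * Real.exp (-l * |((j - ⌊u⌋ : ℤ) : ℝ)|) := by
    intro j
    rw [← Real.exp_add]
    apply Real.exp_le_exp.mpr
    have h1 : |((j - ⌊u⌋ : ℤ) : ℝ)| ≤ |(j : ℝ) - u| + 1 := by
      push_cast
      have h2 : ((j : ℝ) - ⌊u⌋) = ((j : ℝ) - u) + (u - ⌊u⌋) := by ring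
      rw [h2]
      refine (abs_add_le _ _).trans ?_
      have h3 : |u - (⌊u⌋ : ℝ)| ≤ 1 := by
        rw [abs_of_nonneg (by linarith [Int.floor_le u])]
        linarith [Int.lt_floor_add_one u]
      linarith
    nlinarith [abs_nonneg ((j : ℝ) - u)]
  calc ∑' j : ℤ, ENNReal.ofReal (Real.exp (-l * |(j : ℝ) - u|))
      ≤ ∑' j : ℤ, ENNReal.ofReal (Real.exp l * Real.exp (-l * |((j - ⌊u⌋ : ℤ) : ℝ)|)) :=
        ENNReal.tsum_le_tsum fun j => ENNReal.ofReal_le_ofReal (key j)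
    _ = ENNReal.ofReal (Real.exp l) *
        ∑' j : ℤ, ENNReal.ofReal (Real.exp (-l * |((j - ⌊u⌋ : ℤ) : ℝ)|)) := by
        simp_rw [ENNReal.ofReal_mul (Real.exp_nonneg _)]
        exact ENNReal.tsum_mul_left
    _ ≤ ENNReal.ofReal (Real.exp l) * (2 * (1 - ENNReal.ofReal (Real.exp (-l)))⁻¹) := by
        gcongr
        have hre := (Equiv.subRight (⌊u⌋ : ℤ)).tsum_eq
          (fun k : ℤ => ENNReal.ofReal (Real.exp (-l * |(k : ℝ)|)))
        simp only [Equiv.subRight_apply] at hre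
        rw [hre]
        exact int_tsum_le hl

lemma exp_integrable (d : ℕ) {s : ℝ} (hs : (d : ℝ) + 1 ≤ s) :
    Integrable (fun ξ : Euc d => Real.exp (-s * ‖ξ‖)) := by
  have hnr : (Module.finrank ℝ (Euc d) : ℝ) < (d : ℝ) + 1 := by
    rw [finrank_euclideanSpace_fin]; linarith
  refine (integrable_one_add_norm (μ := (volume : Measure (Euc d))) hnr).mono' ?_ ?_
  · exact (Real.continuous_exp.comp (continuous_const.mul continuous_norm)).aestronglyMeasurable
  · refine Filter.Eventually.of_forall fun ξ => ?_
    rw [Real.norm_eq_abs, abs_of_nonneg (Real.exp_nonneg _)]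
    set t : ℝ := ‖ξ‖ with ht
    have ht0 : (0:ℝ) ≤ t := norm_nonneg _
    have h1 : (0:ℝ) < 1 + t := by linarith
    rw [Real.rpow_neg h1.le, show -s * t = -(s * t) by ring, Real.exp_neg]
    have h2 : (1 + t) ^ ((d : ℝ) + 1) ≤ Real.exp (s * t) := by
      rw [Real.rpow_def_of_pos h1]
      apply Real.exp_le_exp.mpr
      have h3 : Real.log (1 + t) ≤ t := by
        have := Real.log_le_sub_one_of_pos h1
        linarith
      have h4 : Real.log (1 + t) * ((d : ℝ) + 1) ≤ t * ((d : ℝ) + 1) := by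
        apply mul_le_mul_of_nonneg_right h3 (by positivity)
      have h5 : t * ((d : ℝ) + 1) ≤ t * s := mul_le_mul_of_nonneg_left hs ht0
      linarith [h5, h4, mul_comm t s]
    exact inv_anti₀ (by positivity) h2

lemma lint_exp_lt_top (d : ℕ) {s : ℝ} (hs : (d : ℝ) + 1 ≤ s) :
    ∫⁻ ξ : Euc d, ENNReal.ofReal (Real.exp (-s * ‖ξ‖)) < ⊤ :=
  (hasFiniteIntegral_iff_ofReal
    (Filter.Eventually.of_forall fun _ => Real.exp_nonneg _)).mp (exp_integrable d hs).2

lemma lint_shift (d : ℕ) (s : ℝ) (α : Euc d) :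
    ∫⁻ ξ : Euc d, ENNReal.ofReal (Real.exp (-s * ‖α - ξ‖)) =
      ∫⁻ ξ : Euc d, ENNReal.ofReal (Real.exp (-s * ‖ξ‖)) := by
  have hm : Measurable fun ξ : Euc d => ENNReal.ofReal (Real.exp (-s * ‖ξ‖)) :=
    (Real.continuous_exp.comp (continuous_const.mul continuous_norm)).measurable.ennreal_ofReal
  exact (Measure.measurePreserving_sub_left volume α).lintegral_comp hm

lemma tsum_holder {ι : Type*} [Countable ι] [MeasurableSpace ι] [MeasurableSingletonClass ι]
    (f g : ι → ℝ≥0∞) {p p' : ℝ} (hpq : p.HolderConjugate p') :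
    ∑' i, f i * g i ≤ (∑' i, f i ^ p) ^ (1/p) * (∑' i, g i ^ p') ^ (1/p') := by
  have h := ENNReal.lintegral_mul_le_Lp_mul_Lq (Measure.count : Measure ι) hpq
    (measurable_of_countable f).aemeasurable (measurable_of_countable g).aemeasurable
  simpa [lintegral_count, Pi.mul_apply] using h

lemma lattice_sum_le {d : ℕ} (e' : Fin d → Euc d) {c : ℝ} (hc : 0 < c)
    (hlow : ∀ t : Fin d → ℝ, c * ∑ i, |t i| ≤ ‖∑ i, t i • e' i‖)
    (hspan : ∀ ξ : Euc d, ∃ u : Fin d → ℝ, ∑ i, u i • e' i = ξ)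
    {s : ℝ} (hs : 0 < s) (ξ : Euc d) :
    ∑' ι : Fin d → ℤ, ENNReal.ofReal (Real.exp (-s * ‖latPt e' ι - ξ‖)) ≤
      (ENNReal.ofReal (Real.exp (s * c)) *
        (2 * (1 - ENNReal.ofReal (Real.exp (-(s * c))))⁻¹)) ^ d := by
  obtain ⟨u, hu⟩ := hspan ξ
  have hdiff : ∀ ι : Fin d → ℤ, latPt e' ι - ξ = ∑ i, ((ι i : ℝ) - u i) • e' i := by
    intro ι
    rw [← hu, latPt, ← Finset.sum_sub_distrib]
    simp [sub_smul]
  have hbound : ∀ ι : Fin d → ℤ, ENNReal.ofReal (Real.exp (-s * ‖latPt e' ι - ξ‖)) ≤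
      ∏ i, ENNReal.ofReal (Real.exp (-(s * c) * |(ι i : ℝ) - u i|)) := by
    intro ι
    rw [← ENNReal.ofReal_prod_of_nonneg (fun i _ => Real.exp_nonneg _), ← Real.exp_sum]
    apply ENNReal.ofReal_le_ofReal
    apply Real.exp_le_exp.mpr
    have h1 := hlow (fun i => (ι i : ℝ) - u i)
    rw [hdiff ι]
    have h2 : ∑ i, -(s * c) * |(ι i : ℝ) - u i| = -s * (c * ∑ i, |(ι i : ℝ) - u i|) := by
      rw [← Finset.mul_sum]; ring
    rw [h2]
    nlinarith [h1]
  calc ∑' ι : Fin d → ℤ, ENNReal.ofReal (Real.exp (-s * ‖latPt e' ι - ξ‖))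
      ≤ ∑' ι : Fin d → ℤ, ∏ i, ENNReal.ofReal (Real.exp (-(s * c) * |(ι i : ℝ) - u i|)) :=
        ENNReal.tsum_le_tsum hbound
    _ = ∏ i, ∑' j : ℤ, ENNReal.ofReal (Real.exp (-(s * c) * |(j : ℝ) - u i|)) :=
        tsum_pi_prod d (fun i j => ENNReal.ofReal (Real.exp (-(s * c) * |(j:ℝ) - u i|)))
    _ ≤ ∏ _i : Fin d, (ENNReal.ofReal (Real.exp (s * c)) *
          (2 * (1 - ENNReal.ofReal (Real.exp (-(s * c))))⁻¹)) := by
        refine Finset.prod_le_prod' fun i _ => ?_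
        exact int_tsum_shift_le (by positivity) (u i)
    _ = _ := by rw [Finset.prod_const, Finset.card_univ, Fintype.card_fin]

lemma Ebound_ne_top {x : ℝ} (hx : 0 < x) (d : ℕ) :
    (ENNReal.ofReal (Real.exp x) * (2 * (1 - ENNReal.ofReal (Real.exp (-x)))⁻¹)) ^ d ≠ ⊤ := by
  apply ENNReal.pow_ne_top
  apply ENNReal.mul_ne_top ENNReal.ofReal_ne_top
  apply ENNReal.mul_ne_top (by simp)
  rw [ENNReal.inv_ne_top]
  have h1 : ENNReal.ofReal (Real.exp (-x)) < 1 := by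
    rw [← ENNReal.ofReal_one]
    exact ENNReal.ofReal_lt_ofReal_iff_of_nonneg (Real.exp_nonneg _) |>.mpr
      (by rw [Real.exp_lt_one_iff]; linarith)
  exact (tsub_pos_of_lt h1).ne'

end Aux15


set_option maxHeartbeats 1000000 in
/-- the modulation-space-type bound `‖f‖_{M^{∞,q}_{(ω)}} ≲ ‖(a·ω)‖_{ℓ^q}` for
`E`-periodic elements with Fourier coefficients `a`, for `0 < q < ∞` and moderate `ω`. -/
theorem periodic_modulation_norm_le_coeff_norm
    {d : ℕ} (hd : 1 ≤ d) (q : ℝ) (hq : 0 < q)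
    (e e' : Fin d → Euc d) (he : LinearIndependent ℝ e)
    (hdual : ∀ j k, ⟪e j, e' k⟫_ℝ = if j = k then 2 * Real.pi else 0)
    (ω : Euc d → ℝ) (hω : ∀ ξ, 0 < ω ξ)
    (C₀ R : ℝ) (hC₀ : 0 < C₀) (hR : 0 < R)
    (hmod : ∀ ξ η : Euc d, ω (ξ + η) ≤ C₀ * Real.exp (R * ‖η‖) * ω ξ)
    (φ : Euc d → ℂ) (hφc : Continuous φ) (hφne : φ ≠ 0)
    (hφ : ∀ r : ℝ, 0 < r → ∃ Cr : ℝ, 0 < Cr ∧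
      (∀ x : Euc d, ‖φ x‖ ≤ Cr * Real.exp (-r * ‖x‖)) ∧
      (∀ ξ : Euc d, ‖FT φ ξ‖ ≤ Cr * Real.exp (-r * ‖ξ‖))) :
    ∃ C : ℝ, 0 < C ∧ ∀ a : (Fin d → ℤ) → ℂ,
      Summable (fun ι : Fin d → ℤ => (‖a ι‖ * ω (latPt e' ι)) ^ q) →
      (∀ x ξ : Euc d, Summable fun ι : Fin d → ℤ =>
          ‖a ι * (starRingEnd ℂ) (FT φ (latPt e' ι - ξ)) *
              Complex.exp (Complex.I * (⟪x, latPt e' ι - ξ⟫_ℝ : ℂ))‖) ∧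
      (∫⁻ ξ : Euc d,
          ENNReal.ofReal ((⨆ x : Euc d, ‖FserMod e' φ a x ξ‖ * ω ξ) ^ q)) ≤
        ENNReal.ofReal (C * ∑' ι : Fin d → ℤ, (‖a ι‖ * ω (latPt e' ι)) ^ q) := by

  classical
  haveI : Nonempty (Fin d) := Fin.pos_iff_nonempty.mp hd
  have hπ : (0:ℝ) < 2 * Real.pi := by positivity
  -- the lattice constant
  set N : ℝ := ∑ j, ‖e j‖ with hN
  have hNpos : (0:ℝ) < N := by
    have h0 : e ⟨0, hd⟩ ≠ 0 := by
      intro h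
      have h2 := hdual ⟨0, hd⟩ ⟨0, hd⟩
      rw [h, if_pos rfl] at h2
      simp only [inner_zero_left] at h2
      nlinarith [Real.pi_pos]
    exact Finset.sum_pos' (fun j _ => norm_nonneg _)
      ⟨⟨0, hd⟩, Finset.mem_univ _, norm_pos_iff.mpr h0⟩
  set c : ℝ := 2 * Real.pi / N with hcdef
  have hcpos : 0 < c := div_pos hπ hNpos
  have hlow : ∀ t : Fin d → ℝ, c * ∑ i, |t i| ≤ ‖∑ i, t i • e' i‖ := by
    intro t
    have hinner : ∀ j, ⟪e j, ∑ i, t i • e' i⟫_ℝ = 2 * Real.pi * t j := by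
      intro j
      rw [inner_sum]
      simp_rw [real_inner_smul_right, hdual, mul_ite, mul_zero]
      simp [mul_comm]
    have hsum : (∑ j, |t j|) * (2 * Real.pi) ≤ N * ‖∑ i, t i • e' i‖ := by
      rw [hN, Finset.sum_mul, Finset.sum_mul]
      refine Finset.sum_le_sum fun j _ => ?_
      have h1 := abs_real_inner_le_norm (e j) (∑ i, t i • e' i)
      rw [hinner j, abs_mul, abs_of_pos hπ] at h1
      nlinarith [h1]
    rw [hcdef, div_mul_eq_mul_div, div_le_iff₀ hNpos]
    nlinarith [hsum]
  have hspan : ∀ ξ : Euc d, ∃ u : Fin d → ℝ, ∑ i, u i • e' i = ξ := by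
    have hli : LinearIndependent ℝ e' := by
      rw [Fintype.linearIndependent_iff]
      intro g hg j
      have h1 : ⟪e j, ∑ i, g i • e' i⟫_ℝ = 0 := by rw [hg, inner_zero_right]
      rw [inner_sum] at h1
      simp_rw [real_inner_smul_right, hdual, mul_ite, mul_zero] at h1
      simp at h1
      exact h1
    have hsp : Submodule.span ℝ (Set.range e') = ⊤ :=
      hli.span_eq_top_of_card_eq_finrank (by simp [finrank_euclideanSpace_fin])
    intro ξ
    have hmem : ξ ∈ Submodule.span ℝ (Set.range e') := by rw [hsp]; trivial
    exact (Submodule.mem_span_range_iff_exists_fun ℝ).mp hmem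
  -- decay rate choices
  have h1q : (0:ℝ) < 1 + 1/q := by
    have := one_div_pos.mpr hq; linarith
  set s₁ : ℝ := ((d:ℝ) + 2) * (1 + 1/q) with hs₁def
  have hs₁pos : 0 < s₁ := mul_pos (by positivity) h1q
  have hs₁d : (d:ℝ) + 1 ≤ s₁ := by
    have h2 : (1:ℝ) ≤ 1 + 1/q := by
      have := one_div_pos.mpr hq; linarith
    have hd2 : (0:ℝ) ≤ (d:ℝ) := Nat.cast_nonneg d
    nlinarith
  have hqs₁d : (d:ℝ) + 1 ≤ q * s₁ := by
    have h3 : q * s₁ = ((d:ℝ) + 2) * (q + 1) := by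
      rw [hs₁def]; field_simp
    have hd2 : (0:ℝ) ≤ (d:ℝ) := Nat.cast_nonneg d
    nlinarith
  set r : ℝ := R + s₁ with hrdef
  have hrpos : 0 < r := by rw [hrdef]; linarith
  obtain ⟨Cr, hCrpos, hφx, hφξ⟩ := hφ r hrpos
  -- ENNReal constants
  set Es₁ : ℝ≥0∞ := (ENNReal.ofReal (Real.exp (s₁ * c)) *
      (2 * (1 - ENNReal.ofReal (Real.exp (-(s₁ * c))))⁻¹)) ^ d with hEs₁def
  have hEs₁ne : Es₁ ≠ ⊤ := Aux15.Ebound_ne_top (mul_pos hs₁pos hcpos) d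
  have hEs₁0 : Es₁ ≠ 0 := by
    rw [hEs₁def]
    apply pow_ne_zero
    apply mul_ne_zero (ENNReal.ofReal_pos.mpr (Real.exp_pos _)).ne'
    apply mul_ne_zero (by norm_num)
    rw [ENNReal.inv_ne_zero]
    exact (lt_of_le_of_lt tsub_le_self (by norm_num)).ne
  set I1 : ℝ≥0∞ := ∫⁻ ξ : Euc d, ENNReal.ofReal (Real.exp (-s₁ * ‖ξ‖)) with hI1def
  set Iq : ℝ≥0∞ := ∫⁻ ξ : Euc d, ENNReal.ofReal (Real.exp (-(q * s₁) * ‖ξ‖)) with hIqdef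
  have hI1ne : I1 ≠ ⊤ := (Aux15.lint_exp_lt_top d hs₁d).ne
  have hIqne : Iq ≠ ⊤ := (Aux15.lint_exp_lt_top d hqs₁d).ne
  set K : ℝ≥0∞ := ENNReal.ofReal (C₀ * Cr) ^ q * (Iq + Es₁ ^ (q - 1) * I1) + 1 with hKdef
  have hEs₁q1ne : Es₁ ^ (q - 1) ≠ ⊤ := by
    rcases le_or_gt 0 (q - 1) with h | h
    · exact ENNReal.rpow_ne_top_of_nonneg h hEs₁ne
    · intro htop
      rcases ENNReal.rpow_eq_top_iff.mp htop with ⟨h0, _⟩ | ⟨h0, _⟩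
      exacts [hEs₁0 h0, hEs₁ne h0]
  have hKne : K ≠ ⊤ := by
    rw [hKdef]
    refine ENNReal.add_ne_top.mpr ⟨ENNReal.mul_ne_top ?_
      (ENNReal.add_ne_top.mpr ⟨hIqne, ENNReal.mul_ne_top hEs₁q1ne hI1ne⟩), ENNReal.one_ne_top⟩
    exact ENNReal.rpow_ne_top_of_nonneg hq.le ENNReal.ofReal_ne_top
  have hK0 : K ≠ 0 := by
    rw [hKdef]
    simp
  refine ⟨K.toReal, ENNReal.toReal_pos hK0 hKne, ?_⟩
  intro a ha
  -- coefficient bound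
  set T : ℝ := ∑' ι : Fin d → ℤ, (‖a ι‖ * ω (latPt e' ι)) ^ q with hTdef
  have hTnn : 0 ≤ T :=
    tsum_nonneg fun ι => Real.rpow_nonneg (mul_nonneg (norm_nonneg _) (hω _).le) q
  have hTle : ∀ ι, ‖a ι‖ * ω (latPt e' ι) ≤ T ^ (1/q) := by
    intro ι
    have hnn : (0:ℝ) ≤ ‖a ι‖ * ω (latPt e' ι) := mul_nonneg (norm_nonneg _) (hω _).le
    have h1 : (‖a ι‖ * ω (latPt e' ι)) ^ q ≤ T :=
      ha.le_tsum ι fun j _ => Real.rpow_nonneg (mul_nonneg (norm_nonneg _) (hω _).le) q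
    have h2 : ((‖a ι‖ * ω (latPt e' ι)) ^ q) ^ (1/q) ≤ T ^ (1/q) :=
      Real.rpow_le_rpow (Real.rpow_nonneg hnn q) h1 (by positivity)
    rwa [← Real.rpow_mul hnn, mul_one_div, div_self hq.ne', Real.rpow_one] at h2
  set B : ℝ := T ^ (1/q) * C₀ / ω 0 with hBdef
  have hBnn : 0 ≤ B :=
    div_nonneg (mul_nonneg (Real.rpow_nonneg hTnn _) hC₀.le) (hω 0).le
  have ha_bd : ∀ ι, ‖a ι‖ ≤ B * Real.exp (R * ‖latPt e' ι‖) := by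
    intro ι
    have hω0 : ω 0 ≤ C₀ * Real.exp (R * ‖latPt e' ι‖) * ω (latPt e' ι) := by
      have h := hmod (latPt e' ι) (-(latPt e' ι))
      simpa using h
    rw [hBdef, div_mul_eq_mul_div, le_div_iff₀ (hω 0)]
    calc ‖a ι‖ * ω 0 ≤ ‖a ι‖ * (C₀ * Real.exp (R * ‖latPt e' ι‖) * ω (latPt e' ι)) :=
          mul_le_mul_of_nonneg_left hω0 (norm_nonneg _)
      _ = (C₀ * Real.exp (R * ‖latPt e' ι‖)) * (‖a ι‖ * ω (latPt e' ι)) := by ring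
      _ ≤ (C₀ * Real.exp (R * ‖latPt e' ι‖)) * T ^ (1/q) :=
          mul_le_mul_of_nonneg_left (hTle ι) (by positivity)
      _ = T ^ (1/q) * C₀ * Real.exp (R * ‖latPt e' ι‖) := by ring
  -- norms of the terms
  have hnorm : ∀ (x ξ : Euc d) (ι : Fin d → ℤ),
      ‖a ι * (starRingEnd ℂ) (FT φ (latPt e' ι - ξ)) *
        Complex.exp (Complex.I * (⟪x, latPt e' ι - ξ⟫_ℝ : ℂ))‖ =
      ‖a ι‖ * ‖FT φ (latPt e' ι - ξ)‖ := by
    intro x ξ ι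
    rw [norm_mul, norm_mul, RCLike.norm_conj]
    have hexp : ‖Complex.exp (Complex.I * (⟪x, latPt e' ι - ξ⟫_ℝ : ℂ))‖ = 1 := by
      rw [Complex.norm_exp]
      simp [Complex.mul_re]
    rw [hexp, mul_one]
  -- summability of the lattice exponentials
  have hlatsum : ∀ (s : ℝ), 0 < s → ∀ ξ : Euc d,
      Summable fun ι : Fin d → ℤ => Real.exp (-s * ‖latPt e' ι - ξ‖) := by
    intro s hs ξ
    have h1 := Aux15.lattice_sum_le e' hcpos hlow hspan hs ξ
    have h2 : ∑' ι : Fin d → ℤ, ENNReal.ofReal (Real.exp (-s * ‖latPt e' ι - ξ‖)) ≠ ⊤ :=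
      (h1.trans_lt (lt_top_iff_ne_top.mpr (Aux15.Ebound_ne_top (mul_pos hs hcpos) d))).ne
    have h3 := ENNReal.summable_toReal h2
    simpa [ENNReal.toReal_ofReal (Real.exp_nonneg _)] using h3
  -- first conjunct
  have hsum1 : ∀ x ξ : Euc d, Summable fun ι : Fin d → ℤ =>
      ‖a ι * (starRingEnd ℂ) (FT φ (latPt e' ι - ξ)) *
        Complex.exp (Complex.I * (⟪x, latPt e' ι - ξ⟫_ℝ : ℂ))‖ := by
    intro x ξ
    have hmaj : ∀ ι : Fin d → ℤ, ‖a ι‖ * ‖FT φ (latPt e' ι - ξ)‖ ≤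
        (B * Cr * Real.exp (R * ‖ξ‖)) * Real.exp (-s₁ * ‖latPt e' ι - ξ‖) := by
      intro ι
      have hna : ‖latPt e' ι‖ ≤ ‖latPt e' ι - ξ‖ + ‖ξ‖ := by
        calc ‖latPt e' ι‖ = ‖(latPt e' ι - ξ) + ξ‖ := by rw [sub_add_cancel]
        _ ≤ ‖latPt e' ι - ξ‖ + ‖ξ‖ := norm_add_le _ _
      calc ‖a ι‖ * ‖FT φ (latPt e' ι - ξ)‖
          ≤ (B * Real.exp (R * ‖latPt e' ι‖)) * (Cr * Real.exp (-r * ‖latPt e' ι - ξ‖)) :=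
            mul_le_mul (ha_bd ι) (hφξ _) (norm_nonneg _) (by positivity)
        _ = (B * Cr) * Real.exp (R * ‖latPt e' ι‖ + -r * ‖latPt e' ι - ξ‖) := by
            rw [Real.exp_add]; ring
        _ ≤ (B * Cr) * Real.exp (R * ‖ξ‖ + -s₁ * ‖latPt e' ι - ξ‖) := by
            have hBCr : 0 ≤ B * Cr := mul_nonneg hBnn hCrpos.le
            refine mul_le_mul_of_nonneg_left (Real.exp_le_exp.mpr ?_) hBCr
            rw [hrdef]
            nlinarith [mul_le_mul_of_nonneg_left hna hR.le]
        _ = (B * Cr * Real.exp (R * ‖ξ‖)) * Real.exp (-s₁ * ‖latPt e' ι - ξ‖) := by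
            rw [Real.exp_add]; ring
    have hmajsum : Summable (fun ι : Fin d → ℤ =>
        (B * Cr * Real.exp (R * ‖ξ‖)) * Real.exp (-s₁ * ‖latPt e' ι - ξ‖)) :=
      (hlatsum s₁ hs₁pos ξ).mul_left _
    exact Summable.of_nonneg_of_le (fun ι => norm_nonneg _)
      (fun ι => le_of_eq_of_le (hnorm x ξ ι) (hmaj ι)) hmajsum
  refine ⟨hsum1, ?_⟩
  -- definitions for the weighted bound
  set D : (Fin d → ℤ) → ℝ≥0∞ := fun ι => ENNReal.ofReal (‖a ι‖ * ω (latPt e' ι)) with hDdef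
  -- pointwise bound for the integrand
  have hpt : ∀ ξ : Euc d,
      ENNReal.ofReal ((⨆ x : Euc d, ‖FserMod e' φ a x ξ‖ * ω ξ) ^ q) ≤
      (ENNReal.ofReal (C₀ * Cr) *
        ∑' ι : Fin d → ℤ, D ι * ENNReal.ofReal (Real.exp (-s₁ * ‖latPt e' ι - ξ‖))) ^ q := by
    intro ξ
    have hGsum : Summable fun ι : Fin d → ℤ => ‖a ι‖ * ‖FT φ (latPt e' ι - ξ)‖ :=
      (hsum1 0 ξ).congr (fun ι => hnorm 0 ξ ι)
    have hGnn : (0:ℝ) ≤ ∑' ι : Fin d → ℤ, ‖a ι‖ * ‖FT φ (latPt e' ι - ξ)‖ :=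
      tsum_nonneg fun ι => mul_nonneg (norm_nonneg _) (norm_nonneg _)
    have hFle : ∀ x, ‖FserMod e' φ a x ξ‖ ≤
        ∑' ι : Fin d → ℤ, ‖a ι‖ * ‖FT φ (latPt e' ι - ξ)‖ := by
      intro x
      have h1 := norm_tsum_le_tsum_norm (hsum1 x ξ)
      calc ‖FserMod e' φ a x ξ‖
          ≤ ∑' ι : Fin d → ℤ, ‖a ι * (starRingEnd ℂ) (FT φ (latPt e' ι - ξ)) *
              Complex.exp (Complex.I * (⟪x, latPt e' ι - ξ⟫_ℝ : ℂ))‖ := h1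
        _ = ∑' ι : Fin d → ℤ, ‖a ι‖ * ‖FT φ (latPt e' ι - ξ)‖ := tsum_congr (hnorm x ξ)
    have hsup : (⨆ x : Euc d, ‖FserMod e' φ a x ξ‖ * ω ξ) ≤
        (∑' ι : Fin d → ℤ, ‖a ι‖ * ‖FT φ (latPt e' ι - ξ)‖) * ω ξ :=
      ciSup_le fun x => mul_le_mul_of_nonneg_right (hFle x) (hω ξ).le
    have hsupnn : 0 ≤ ⨆ x : Euc d, ‖FserMod e' φ a x ξ‖ * ω ξ :=
      Real.iSup_nonneg fun x => mul_nonneg (norm_nonneg _) (hω ξ).le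
    have hof : ENNReal.ofReal ((∑' ι : Fin d → ℤ, ‖a ι‖ * ‖FT φ (latPt e' ι - ξ)‖) * ω ξ) ≤
        ENNReal.ofReal (C₀ * Cr) *
          ∑' ι : Fin d → ℤ, D ι * ENNReal.ofReal (Real.exp (-s₁ * ‖latPt e' ι - ξ‖)) := by
      have heq : (∑' ι : Fin d → ℤ, ‖a ι‖ * ‖FT φ (latPt e' ι - ξ)‖) * ω ξ =
          ∑' ι : Fin d → ℤ, ‖a ι‖ * ‖FT φ (latPt e' ι - ξ)‖ * ω ξ := tsum_mul_right.symm
      rw [heq, ENNReal.ofReal_tsum_of_nonneg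
        (fun ι => mul_nonneg (mul_nonneg (norm_nonneg _) (norm_nonneg _)) (hω ξ).le)
        (hGsum.mul_right _)]
      have hterm : ∀ ι : Fin d → ℤ,
          ENNReal.ofReal (‖a ι‖ * ‖FT φ (latPt e' ι - ξ)‖ * ω ξ) ≤
          ENNReal.ofReal (C₀ * Cr) *
            (D ι * ENNReal.ofReal (Real.exp (-s₁ * ‖latPt e' ι - ξ‖))) := by
        intro ι
        have hmodineq : ω ξ ≤ C₀ * Real.exp (R * ‖latPt e' ι - ξ‖) * ω (latPt e' ι) := by
          have h := hmod (latPt e' ι) (ξ - latPt e' ι)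
          rw [add_sub_cancel, norm_sub_rev] at h
          exact h
        have hreal : ‖a ι‖ * ‖FT φ (latPt e' ι - ξ)‖ * ω ξ ≤
            (‖a ι‖ * ω (latPt e' ι)) * (C₀ * Cr) * Real.exp (-s₁ * ‖latPt e' ι - ξ‖) := by
          calc ‖a ι‖ * ‖FT φ (latPt e' ι - ξ)‖ * ω ξ
              ≤ ‖a ι‖ * (Cr * Real.exp (-r * ‖latPt e' ι - ξ‖)) *
                  (C₀ * Real.exp (R * ‖latPt e' ι - ξ‖) * ω (latPt e' ι)) := by
                refine mul_le_mul (mul_le_mul_of_nonneg_left (hφξ _) (norm_nonneg _))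
                  hmodineq (hω ξ).le ?_
                positivity
            _ = (‖a ι‖ * ω (latPt e' ι)) * (C₀ * Cr) *
                  Real.exp (-r * ‖latPt e' ι - ξ‖ + R * ‖latPt e' ι - ξ‖) := by
                rw [Real.exp_add]; ring
            _ = (‖a ι‖ * ω (latPt e' ι)) * (C₀ * Cr) *
                  Real.exp (-s₁ * ‖latPt e' ι - ξ‖) := by
                congr 2
                rw [hrdef]; ring
        calc ENNReal.ofReal (‖a ι‖ * ‖FT φ (latPt e' ι - ξ)‖ * ω ξ)
            ≤ ENNReal.ofReal ((‖a ι‖ * ω (latPt e' ι)) * (C₀ * Cr) *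
                Real.exp (-s₁ * ‖latPt e' ι - ξ‖)) := ENNReal.ofReal_le_ofReal hreal
          _ = ENNReal.ofReal (C₀ * Cr) *
                (D ι * ENNReal.ofReal (Real.exp (-s₁ * ‖latPt e' ι - ξ‖))) := by
              rw [ENNReal.ofReal_mul (mul_nonneg (mul_nonneg (norm_nonneg _) (hω _).le)
                (mul_nonneg hC₀.le hCrpos.le)), ENNReal.ofReal_mul
                (mul_nonneg (norm_nonneg _) (hω _).le)]
              rw [hDdef]
              ring
      calc ∑' ι : Fin d → ℤ, ENNReal.ofReal (‖a ι‖ * ‖FT φ (latPt e' ι - ξ)‖ * ω ξ)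
          ≤ ∑' ι : Fin d → ℤ, ENNReal.ofReal (C₀ * Cr) *
              (D ι * ENNReal.ofReal (Real.exp (-s₁ * ‖latPt e' ι - ξ‖))) :=
            ENNReal.tsum_le_tsum hterm
        _ = ENNReal.ofReal (C₀ * Cr) *
              ∑' ι : Fin d → ℤ, D ι * ENNReal.ofReal (Real.exp (-s₁ * ‖latPt e' ι - ξ‖)) :=
            ENNReal.tsum_mul_left
    calc ENNReal.ofReal ((⨆ x : Euc d, ‖FserMod e' φ a x ξ‖ * ω ξ) ^ q)
        ≤ ENNReal.ofReal (((∑' ι : Fin d → ℤ, ‖a ι‖ * ‖FT φ (latPt e' ι - ξ)‖) * ω ξ) ^ q) :=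
          ENNReal.ofReal_le_ofReal (Real.rpow_le_rpow hsupnn hsup hq.le)
      _ = ENNReal.ofReal ((∑' ι : Fin d → ℤ, ‖a ι‖ * ‖FT φ (latPt e' ι - ξ)‖) * ω ξ) ^ q := by
          rw [ENNReal.ofReal_rpow_of_nonneg (mul_nonneg hGnn (hω ξ).le) hq.le]
      _ ≤ (ENNReal.ofReal (C₀ * Cr) *
            ∑' ι : Fin d → ℤ, D ι * ENNReal.ofReal (Real.exp (-s₁ * ‖latPt e' ι - ξ‖))) ^ q :=
          ENNReal.rpow_le_rpow hof hq.le
  -- measurability helper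
  have hmeasH : ∀ (s : ℝ) (α : Euc d),
      Measurable fun ξ : Euc d => ENNReal.ofReal (Real.exp (-s * ‖α - ξ‖)) := by
    intro s α
    exact (Real.continuous_exp.comp (continuous_const.mul
      ((continuous_const.sub continuous_id).norm))).measurable.ennreal_ofReal
  have hDq : ∑' ι : Fin d → ℤ, D ι ^ q = ENNReal.ofReal T := by
    rw [hTdef, ENNReal.ofReal_tsum_of_nonneg
      (fun ι => Real.rpow_nonneg (mul_nonneg (norm_nonneg _) (hω _).le) q) ha]
    refine tsum_congr fun ι => ?_
    rw [hDdef, ENNReal.ofReal_rpow_of_nonneg (mul_nonneg (norm_nonneg _) (hω _).le) hq.le]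
  have hDqne : ∀ ι : Fin d → ℤ, D ι ^ q ≠ ⊤ :=
    fun ι => ENNReal.rpow_ne_top_of_nonneg hq.le ENNReal.ofReal_ne_top
  have key : ∀ s : ℝ, (0:ℝ) < s →
      (∫⁻ ξ : Euc d, ∑' ι : Fin d → ℤ,
        D ι ^ q * ENNReal.ofReal (Real.exp (-s * ‖latPt e' ι - ξ‖))) =
      (∫⁻ ξ : Euc d, ENNReal.ofReal (Real.exp (-s * ‖ξ‖))) * ∑' ι : Fin d → ℤ, D ι ^ q := by
    intro s hs
    rw [lintegral_tsum (fun ι => ((hmeasH s (latPt e' ι)).const_mul _).aemeasurable)]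
    have heach : ∀ ι : Fin d → ℤ,
        (∫⁻ ξ : Euc d, D ι ^ q * ENNReal.ofReal (Real.exp (-s * ‖latPt e' ι - ξ‖))) =
        D ι ^ q * ∫⁻ ξ : Euc d, ENNReal.ofReal (Real.exp (-s * ‖ξ‖)) := by
      intro ι
      rw [lintegral_const_mul' _ _ (hDqne ι), Aux15.lint_shift d s (latPt e' ι)]
    simp_rw [heach]
    rw [ENNReal.tsum_mul_right, mul_comm]
  -- the main integral estimate
  have hmain : (∫⁻ ξ : Euc d, (∑' ι : Fin d → ℤ,
      D ι * ENNReal.ofReal (Real.exp (-s₁ * ‖latPt e' ι - ξ‖))) ^ q) ≤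
      (Iq + Es₁ ^ (q - 1) * I1) * ∑' ι : Fin d → ℤ, D ι ^ q := by
    rcases le_or_gt q 1 with hq1 | hq1
    · have hptw : ∀ ξ : Euc d,
          (∑' ι : Fin d → ℤ, D ι * ENNReal.ofReal (Real.exp (-s₁ * ‖latPt e' ι - ξ‖))) ^ q ≤
          ∑' ι : Fin d → ℤ, D ι ^ q *
            ENNReal.ofReal (Real.exp (-(q * s₁) * ‖latPt e' ι - ξ‖)) := by
        intro ξ
        refine (Aux15.rpow_tsum_le _ hq hq1).trans (ENNReal.tsum_le_tsum fun ι => ?_)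
        rw [ENNReal.mul_rpow_of_nonneg _ _ hq.le]
        have hHq : ENNReal.ofReal (Real.exp (-s₁ * ‖latPt e' ι - ξ‖)) ^ q =
            ENNReal.ofReal (Real.exp (-(q * s₁) * ‖latPt e' ι - ξ‖)) := by
          rw [ENNReal.ofReal_rpow_of_nonneg (Real.exp_nonneg _) hq.le, ← Real.exp_mul]
          ring_nf
        rw [hHq]
      calc ∫⁻ ξ : Euc d, (∑' ι : Fin d → ℤ,
            D ι * ENNReal.ofReal (Real.exp (-s₁ * ‖latPt e' ι - ξ‖))) ^ q
          ≤ ∫⁻ ξ : Euc d, ∑' ι : Fin d → ℤ, D ι ^ q *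
              ENNReal.ofReal (Real.exp (-(q * s₁) * ‖latPt e' ι - ξ‖)) := lintegral_mono hptw
        _ = Iq * ∑' ι : Fin d → ℤ, D ι ^ q := key (q * s₁) (mul_pos hq hs₁pos)
        _ ≤ (Iq + Es₁ ^ (q - 1) * I1) * ∑' ι : Fin d → ℤ, D ι ^ q := by
            gcongr
            exact le_self_add
    · have hq1' : (0:ℝ) < q - 1 := by linarith
      have hconj : q.HolderConjugate (Real.conjExponent q) :=
        Real.HolderConjugate.conjExponent hq1
      set p' : ℝ := Real.conjExponent q with hp'def
      have hp'pos : 0 < p' := by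
        rw [hp'def, Real.conjExponent]
        positivity
      have hqp' : (1/p') * q = q - 1 := by
        rw [hp'def, Real.conjExponent]
        field_simp
      have hinv : 1/q + 1/p' = 1 := by
        have h := hconj.inv_add_inv_eq_one
        rw [hp'def]
        simpa [one_div] using h
      have hptw : ∀ ξ : Euc d,
          (∑' ι : Fin d → ℤ, D ι * ENNReal.ofReal (Real.exp (-s₁ * ‖latPt e' ι - ξ‖))) ^ q ≤
          (∑' ι : Fin d → ℤ, D ι ^ q * ENNReal.ofReal (Real.exp (-s₁ * ‖latPt e' ι - ξ‖))) *
            Es₁ ^ (q - 1) := by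
        intro ξ
        set H : (Fin d → ℤ) → ℝ≥0∞ :=
          fun ι => ENNReal.ofReal (Real.exp (-s₁ * ‖latPt e' ι - ξ‖)) with hHdef
        have hH0 : ∀ ι, H ι ≠ 0 := fun ι => (ENNReal.ofReal_pos.mpr (Real.exp_pos _)).ne'
        have hHt : ∀ ι, H ι ≠ ⊤ := fun ι => ENNReal.ofReal_ne_top
        have hsplit : ∀ ι, D ι * H ι = (D ι * H ι ^ (1/q)) * H ι ^ (1/p') := by
          intro ι
          rw [mul_assoc, ← ENNReal.rpow_add _ _ (hH0 ι) (hHt ι), hinv, ENNReal.rpow_one]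
        have hhold := Aux15.tsum_holder (fun ι => D ι * H ι ^ (1/q))
          (fun ι => H ι ^ (1/p')) hconj
        have hfq : ∀ ι, (D ι * H ι ^ (1/q)) ^ q = D ι ^ q * H ι := by
          intro ι
          rw [ENNReal.mul_rpow_of_nonneg _ _ hq.le, ← ENNReal.rpow_mul, one_div,
            inv_mul_cancel₀ hq.ne', ENNReal.rpow_one]
        have hgp : ∀ ι, (H ι ^ (1/p')) ^ p' = H ι := by
          intro ι
          rw [← ENNReal.rpow_mul, one_div, inv_mul_cancel₀ hp'pos.ne', ENNReal.rpow_one]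
        have hHbound : ∑' ι : Fin d → ℤ, H ι ≤ Es₁ := by
          rw [hEs₁def]
          exact Aux15.lattice_sum_le e' hcpos hlow hspan hs₁pos ξ
        calc (∑' ι : Fin d → ℤ, D ι * H ι) ^ q
            = (∑' ι : Fin d → ℤ, (D ι * H ι ^ (1/q)) * H ι ^ (1/p')) ^ q := by
              rw [tsum_congr hsplit]
          _ ≤ ((∑' ι : Fin d → ℤ, (D ι * H ι ^ (1/q)) ^ q) ^ (1/q) *
                (∑' ι : Fin d → ℤ, (H ι ^ (1/p')) ^ p') ^ (1/p')) ^ q :=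
              ENNReal.rpow_le_rpow hhold hq.le
          _ = (∑' ι : Fin d → ℤ, D ι ^ q * H ι) *
                (∑' ι : Fin d → ℤ, H ι) ^ ((1/p') * q) := by
              simp_rw [hfq, hgp]
              rw [ENNReal.mul_rpow_of_nonneg _ _ hq.le, ← ENNReal.rpow_mul,
                ← ENNReal.rpow_mul, one_div, inv_mul_cancel₀ hq.ne', ENNReal.rpow_one]
          _ ≤ (∑' ι : Fin d → ℤ, D ι ^ q * H ι) * Es₁ ^ (q - 1) := by
              rw [hqp']
              exact mul_le_mul' le_rfl (ENNReal.rpow_le_rpow hHbound hq1'.le)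
      calc ∫⁻ ξ : Euc d, (∑' ι : Fin d → ℤ,
            D ι * ENNReal.ofReal (Real.exp (-s₁ * ‖latPt e' ι - ξ‖))) ^ q
          ≤ ∫⁻ ξ : Euc d, (∑' ι : Fin d → ℤ, D ι ^ q *
              ENNReal.ofReal (Real.exp (-s₁ * ‖latPt e' ι - ξ‖))) * Es₁ ^ (q - 1) :=
            lintegral_mono hptw
        _ = (∫⁻ ξ : Euc d, ∑' ι : Fin d → ℤ, D ι ^ q *
              ENNReal.ofReal (Real.exp (-s₁ * ‖latPt e' ι - ξ‖))) * Es₁ ^ (q - 1) :=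
            lintegral_mul_const' _ _ hEs₁q1ne
        _ = I1 * (∑' ι : Fin d → ℤ, D ι ^ q) * Es₁ ^ (q - 1) := by
            rw [key s₁ hs₁pos]
        _ = (Es₁ ^ (q - 1) * I1) * ∑' ι : Fin d → ℤ, D ι ^ q := by ring
        _ ≤ (Iq + Es₁ ^ (q - 1) * I1) * ∑' ι : Fin d → ℤ, D ι ^ q := by
            gcongr
            exact le_add_self
  -- put everything together
  calc ∫⁻ ξ : Euc d, ENNReal.ofReal ((⨆ x : Euc d, ‖FserMod e' φ a x ξ‖ * ω ξ) ^ q)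
      ≤ ∫⁻ ξ : Euc d, (ENNReal.ofReal (C₀ * Cr) *
          ∑' ι : Fin d → ℤ, D ι * ENNReal.ofReal (Real.exp (-s₁ * ‖latPt e' ι - ξ‖))) ^ q :=
        lintegral_mono hpt
    _ = ∫⁻ ξ : Euc d, ENNReal.ofReal (C₀ * Cr) ^ q *
          (∑' ι : Fin d → ℤ, D ι * ENNReal.ofReal (Real.exp (-s₁ * ‖latPt e' ι - ξ‖))) ^ q := by
        simp_rw [ENNReal.mul_rpow_of_nonneg _ _ hq.le]
    _ = ENNReal.ofReal (C₀ * Cr) ^ q * ∫⁻ ξ : Euc d,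
          (∑' ι : Fin d → ℤ, D ι * ENNReal.ofReal (Real.exp (-s₁ * ‖latPt e' ι - ξ‖))) ^ q :=
        lintegral_const_mul' _ _ (ENNReal.rpow_ne_top_of_nonneg hq.le ENNReal.ofReal_ne_top)
    _ ≤ ENNReal.ofReal (C₀ * Cr) ^ q *
          ((Iq + Es₁ ^ (q - 1) * I1) * ∑' ι : Fin d → ℤ, D ι ^ q) := by gcongr
    _ ≤ K * ENNReal.ofReal T := by
        rw [hDq, hKdef, ← mul_assoc]
        gcongr
        exact le_self_add
    _ = ENNReal.ofReal (K.toReal * T) := by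
        rw [ENNReal.ofReal_mul ENNReal.toReal_nonneg, ENNReal.ofReal_toReal hKne]

end
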